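/- With q^α = β̃, q^β = α̃, b = N+1+a, the limit as q^a → 0 of q^{a+1} β_n / c₁ equals 1 - (1 - α̃β̃q^{n+1})(1 - α̃q^{n+1})(1 - q^{n-N}) / ((1 - α̃β̃q^{2n+1})(1 - α̃β̃q^{2n+2})) + α̃q^{n-N}(1-q^n)(1-β̃q^n)(1-α̃β̃q^{n+N+1}) / ((1-α̃β̃q^{2n})(1-α̃β̃q^{2n+1})), the recurrence coefficient β̃_n of the monic q-Hahn polynomials. -/

import Mathlib

open Filter

/-- The symmetric `q`-number `[x]_q`. -/
noncomputable def qnum (q x : ℝ) : ℝ :=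
  (q ^ (x / 2) - q ^ (-x / 2)) / (q ^ ((1 : ℝ) / 2) - q ^ (-(1 : ℝ) / 2))

/-- `κ_q = q^{1/2} - q^{-1/2}`. -/
noncomputable def kq (q : ℝ) : ℝ := q ^ ((1 : ℝ) / 2) - q ^ (-(1 : ℝ) / 2)

noncomputable def c1 (q : ℝ) : ℝ := q ^ ((1 : ℝ) / 2) / (kq q) ^ 2

/-- The coefficient `β_n` of the three-term recurrence of the non-standard `q`-Racah
polynomials, with real parameters `a`, `b`, `α`, `β`. -/
noncomputable def qRacahBetaR (q a b α β : ℝ) (n : ℕ) : ℝ :=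
  qnum q a * qnum q (a + 1) -
    qnum q (α + β + n + 1) * qnum q (a - b + n + 1) * qnum q (β + n + 1) *
      qnum q (a + b + α + n + 1) /
      (qnum q (α + β + 2 * n + 1) * qnum q (α + β + 2 * n + 2)) -
    qnum q (α + n) * qnum q (b - a + α + β + n) * qnum q (-a - b + β + n) * qnum q n /
      (qnum q (α + β + 2 * n) * qnum q (α + β + 2 * n + 1))

lemma qhahn_qnum' (q : ℝ) (hq : 0 < q) (x : ℝ) :
    qnum q x = q ^ (-x/2) * (q ^ x - 1) / kq q := by
  rw [qnum, kq, mul_sub, mul_one, ← Real.rpow_add hq]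
  ring_nf

lemma qhahn_kq_neg (q : ℝ) (hq0 : 0 < q) (hq1 : q < 1) : kq q < 0 := by
  rw [kq, sub_neg]
  exact Real.rpow_lt_rpow_of_exponent_gt hq0 hq1 (by norm_num)

lemma qhahn_L1 (q : ℝ) (hq : 0 < q) (x y K : ℝ) :
    (q ^ (-x/2) * (q ^ x - 1) / K) * (q ^ (-y/2) * (q ^ y - 1) / K)
      = q ^ (-(x+y)/2) * ((q ^ x - 1) * (q ^ y - 1)) / K^2 := by
  rw [div_mul_div_comm, ← sq]
  congr 1
  rw [show q ^ (-(x+y)/2) = q ^ (-x/2) * q ^ (-y/2) by rw [← Real.rpow_add hq]; ring_nf]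
  ring

lemma qhahn_alg (d e₁ e₂ e₃ K A B C : ℝ) (hK : K ≠ 0) (he₃ : e₃ ≠ 0)
    (h : d * (e₁ * e₂) = e₃) :
    d * K^2 * (e₁ * A / K^2 * (e₂ * B / K^2) / (e₃ * C / K^2)) = A * B / C := by
  rcases eq_or_ne C 0 with hC | hC
  · simp [hC]
  · field_simp
    linear_combination A * B * h

lemma qhahn_alg2 (d e K A : ℝ) (hK : K ≠ 0) (h : d * e = 1) :
    d * K^2 * (e * A / K^2) = A := by
  field_simp
  linear_combination A * h

lemma qhahn_key4 (q : ℝ) (hq0 : 0 < q) (hq1 : q < 1) (x₁ x₂ x₃ x₄ y₁ y₂ c : ℝ)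
    (h : 2*c + y₁ + y₂ = x₁+x₂+x₃+x₄) :
    q ^ c * (kq q)^2 *
      (qnum q x₁ * qnum q x₂ * qnum q x₃ * qnum q x₄ / (qnum q y₁ * qnum q y₂))
    = (q^x₁ - 1)*(q^x₂ - 1) * ((q^x₃ - 1)*(q^x₄ - 1)) / ((q^y₁ - 1)*(q^y₂ - 1)) := by
  have hK : kq q ≠ 0 := (qhahn_kq_neg q hq0 hq1).ne
  rw [qhahn_qnum' q hq0 x₁, qhahn_qnum' q hq0 x₂, qhahn_qnum' q hq0 x₃, qhahn_qnum' q hq0 x₄,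
    qhahn_qnum' q hq0 y₁, qhahn_qnum' q hq0 y₂,
    mul_assoc (q ^ (-x₁/2) * (q ^ x₁ - 1) / kq q * (q ^ (-x₂/2) * (q ^ x₂ - 1) / kq q)),
    qhahn_L1 q hq0 x₁ x₂, qhahn_L1 q hq0 x₃ x₄, qhahn_L1 q hq0 y₁ y₂]
  exact qhahn_alg _ _ _ _ _ _ _ _ hK (Real.rpow_pos_of_pos hq0 _).ne'
    (by rw [← Real.rpow_add hq0, ← Real.rpow_add hq0]; congr 1; linarith)

lemma qhahn_key2 (q : ℝ) (hq0 : 0 < q) (hq1 : q < 1) (x y c : ℝ) (h : 2*c = x + y) :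
    q ^ c * (kq q)^2 * (qnum q x * qnum q y) = (q^x - 1) * (q^y - 1) := by
  have hK : kq q ≠ 0 := (qhahn_kq_neg q hq0 hq1).ne
  rw [qhahn_qnum' q hq0 x, qhahn_qnum' q hq0 y, qhahn_L1 q hq0 x y]
  exact qhahn_alg2 _ _ _ _ hK
    (by rw [← Real.rpow_add hq0, show c + -(x+y)/2 = 0 by linarith, Real.rpow_zero])

/-- The limit function: the `q`-Racah expression rewritten as a polynomial-type function
of `t = q^a`. -/
noncomputable def qhahnG (q ta tb : ℝ) (N n : ℕ) (t : ℝ) : ℝ :=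
    (t - 1) * (q*t - 1)
      - (ta*tb*(q^n*q) - 1) * (q^((n:ℝ) - N) - 1) *
          ((ta*(q^n*q) - 1) * (t*t*(tb*q^(N+n+2)) - 1)) /
          ((ta*tb*q^(2*n+1) - 1) * (ta*tb*q^(2*n+2) - 1))
      - q * ((tb*q^n - 1) * (ta*tb*q^(n+N+1) - 1) *
          ((ta*q^((n:ℝ) - N - 1) - t*t) * (q^n - 1)) /
          ((ta*tb*q^(2*n) - 1) * (ta*tb*q^(2*n+1) - 1)))

lemma qhahn_pointwise (q ta tb : ℝ) (hq0 : 0 < q) (hq1 : q < 1)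
    (hta : 0 < ta) (htb : 0 < tb)
    (N n : ℕ) (t : ℝ) (ht : 0 < t) :
    q ^ (Real.logb q t + 1) / c1 q *
      qRacahBetaR q (Real.logb q t) ((N : ℝ) + 1 + Real.logb q t)
        (Real.logb q tb) (Real.logb q ta) n
    = qhahnG q ta tb N n t := by
  have hq1' : q ≠ 1 := hq1.ne
  have hK : kq q ≠ 0 := (qhahn_kq_neg q hq0 hq1).ne
  set a := Real.logb q t with ha
  set α := Real.logb q tb with hα
  set β := Real.logb q ta with hβ
  set b : ℝ := (N : ℝ) + 1 + a with hb
  have hqa : q ^ a = t := Real.rpow_logb hq0 hq1' ht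
  have hqα : q ^ α = tb := Real.rpow_logb hq0 hq1' htb
  have hqβ : q ^ β = ta := Real.rpow_logb hq0 hq1' hta
  -- prefactor
  have hC : q ^ (a + 1) / c1 q = q ^ (a + 1/2) * (kq q)^2 := by
    rw [c1, div_div_eq_mul_div, div_eq_iff (Real.rpow_pos_of_pos hq0 _).ne']
    have h1 : q ^ (a + 1) = q ^ (a + 1/2) * q ^ ((1:ℝ)/2) := by
      rw [← Real.rpow_add hq0]; congr 1; ring
    rw [h1]; ring
  rw [qhahnG, qRacahBetaR, hC, mul_sub, mul_sub]
  -- piece 1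
  rw [qhahn_key2 q hq0 hq1 a (a+1) (a+1/2) (by ring)]
  -- piece 2
  rw [qhahn_key4 q hq0 hq1 (α+β+(n:ℝ)+1) (a-b+(n:ℝ)+1) (β+(n:ℝ)+1) (a+b+α+(n:ℝ)+1)
    (α+β+2*(n:ℝ)+1) (α+β+2*(n:ℝ)+2) (a+1/2) (by rw [hb]; ring)]
  -- piece 3 : split off q^(2a+1)
  have h3 : q ^ (a + 1/2) * kq q ^ 2 *
      (qnum q (α+(n:ℝ)) * qnum q (b-a+α+β+(n:ℝ)) * qnum q (-a-b+β+(n:ℝ)) * qnum q (n:ℝ) /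
        (qnum q (α+β+2*(n:ℝ)) * qnum q (α+β+2*(n:ℝ)+1)))
      = q ^ (2*a+1) * (q ^ (-(a+1/2)) * kq q ^ 2 *
      (qnum q (α+(n:ℝ)) * qnum q (b-a+α+β+(n:ℝ)) * qnum q (-a-b+β+(n:ℝ)) * qnum q (n:ℝ) /
        (qnum q (α+β+2*(n:ℝ)) * qnum q (α+β+2*(n:ℝ)+1)))) := by
    rw [show q ^ (a+1/2) = q ^ (2*a+1) * q ^ (-(a+1/2)) by
      rw [← Real.rpow_add hq0]; congr 1; ring]
    ring
  rw [h3, qhahn_key4 q hq0 hq1 (α+(n:ℝ)) (b-a+α+β+(n:ℝ)) (-a-b+β+(n:ℝ)) (n:ℝ)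
    (α+β+2*(n:ℝ)) (α+β+2*(n:ℝ)+1) (-(a+1/2)) (by rw [hb]; ring)]
  -- atom conversions
  have e0 : q ^ (a + 1) = q * t := by
    rw [Real.rpow_add hq0, hqa, Real.rpow_one]; ring
  have e1 : q ^ (α + β + (n:ℝ) + 1) = ta * tb * (q ^ n * q) := by
    rw [show α + β + (n:ℝ) + 1 = α + (β + ((n+1:ℕ):ℝ)) by push_cast; ring,
      Real.rpow_add hq0, Real.rpow_add hq0, Real.rpow_natCast, hqα, hqβ]; ring
  have e2 : q ^ (a - b + (n:ℝ) + 1) = q ^ ((n:ℝ) - N) := by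
    congr 1; rw [hb]; ring
  have e3 : q ^ (β + (n:ℝ) + 1) = ta * (q ^ n * q) := by
    rw [show β + (n:ℝ) + 1 = β + ((n+1:ℕ):ℝ) by push_cast; ring,
      Real.rpow_add hq0, Real.rpow_natCast, hqβ]; ring
  have e4 : q ^ (a + b + α + (n:ℝ) + 1) = t * t * (tb * q ^ (N+n+2)) := by
    rw [show a + b + α + (n:ℝ) + 1 = a + (a + (α + ((N+n+2:ℕ):ℝ))) by rw [hb]; push_cast; ring,
      Real.rpow_add hq0, Real.rpow_add hq0, Real.rpow_add hq0, Real.rpow_natCast, hqa, hqα]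
    ring
  have e5 : q ^ (α + β + 2*(n:ℝ) + 1) = ta * tb * q ^ (2*n+1) := by
    rw [show α + β + 2*(n:ℝ) + 1 = α + (β + ((2*n+1:ℕ):ℝ)) by push_cast; ring,
      Real.rpow_add hq0, Real.rpow_add hq0, Real.rpow_natCast, hqα, hqβ]; ring
  have e6 : q ^ (α + β + 2*(n:ℝ) + 2) = ta * tb * q ^ (2*n+2) := by
    rw [show α + β + 2*(n:ℝ) + 2 = α + (β + ((2*n+2:ℕ):ℝ)) by push_cast; ring,
      Real.rpow_add hq0, Real.rpow_add hq0, Real.rpow_natCast, hqα, hqβ]; ring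
  have e7 : q ^ (α + (n:ℝ)) = tb * q ^ n := by
    rw [Real.rpow_add hq0, Real.rpow_natCast, hqα]
  have e8 : q ^ (b - a + α + β + (n:ℝ)) = ta * tb * q ^ (n+N+1) := by
    rw [show b - a + α + β + (n:ℝ) = α + (β + ((n+N+1:ℕ):ℝ)) by rw [hb]; push_cast; ring,
      Real.rpow_add hq0, Real.rpow_add hq0, Real.rpow_natCast, hqα, hqβ]; ring
  have e9 : q ^ ((n:ℝ)) = q ^ n := Real.rpow_natCast q n
  have e10 : q ^ (α + β + 2*(n:ℝ)) = ta * tb * q ^ (2*n) := by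
    rw [show α + β + 2*(n:ℝ) = α + (β + ((2*n:ℕ):ℝ)) by push_cast; ring,
      Real.rpow_add hq0, Real.rpow_add hq0, Real.rpow_natCast, hqα, hqβ]; ring
  have hq2a : q ^ (2*a+1) = q * (t * t) := by
    rw [show 2*a+1 = a + a + 1 by ring, Real.rpow_add hq0, Real.rpow_add hq0, hqa,
      Real.rpow_one]; ring
  have hz : t * t * q ^ (-a - b + β + (n:ℝ)) = ta * q ^ ((n:ℝ) - N - 1) := by
    rw [← hqa, ← Real.rpow_add hq0, ← Real.rpow_add hq0,
      show a + a + (-a - b + β + (n:ℝ)) = β + ((n:ℝ) - N - 1) by rw [hb]; ring,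
      Real.rpow_add hq0, hqβ]
  rw [hqa, e0, e1, e2, e3, e4, e5, e6, e7, e8, e9, e10, hq2a]
  linear_combination (-(q*(tb*q^n - 1)*(ta*tb*q^(n+N+1) - 1)*(q^n - 1) /
    ((ta*tb*q^(2*n) - 1)*(ta*tb*q^(2*n+1) - 1)))) * hz

lemma qhahn_limit (q ta tb : ℝ) (hq0 : 0 < q) (N n : ℕ) :
    Tendsto (qhahnG q ta tb N n) (nhdsWithin 0 (Set.Ioi 0))
      (nhds (1 -
        (1 - ta * tb * q ^ (n + 1)) * (1 - ta * q ^ (n + 1)) * (1 - q ^ ((n : ℝ) - N)) /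
          ((1 - ta * tb * q ^ (2 * n + 1)) * (1 - ta * tb * q ^ (2 * n + 2))) +
        ta * q ^ ((n : ℝ) - N) * (1 - q ^ n) * (1 - tb * q ^ n) *
          (1 - ta * tb * q ^ (n + N + 1)) /
          ((1 - ta * tb * q ^ (2 * n)) * (1 - ta * tb * q ^ (2 * n + 1))))) := by
  have hcont : Continuous (qhahnG q ta tb N n) := by
    unfold qhahnG
    fun_prop
  have h0 : qhahnG q ta tb N n 0 = (1 -
        (1 - ta * tb * q ^ (n + 1)) * (1 - ta * q ^ (n + 1)) * (1 - q ^ ((n : ℝ) - N)) /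
          ((1 - ta * tb * q ^ (2 * n + 1)) * (1 - ta * tb * q ^ (2 * n + 2))) +
        ta * q ^ ((n : ℝ) - N) * (1 - q ^ n) * (1 - tb * q ^ n) *
          (1 - ta * tb * q ^ (n + N + 1)) /
          ((1 - ta * tb * q ^ (2 * n)) * (1 - ta * tb * q ^ (2 * n + 1)))) := by
    have hr : q ^ ((n:ℝ) - N) = q * q ^ ((n:ℝ) - N - 1) := by
      have h1 : q ^ ((1:ℝ) + ((n:ℝ) - N - 1)) = q * q ^ ((n:ℝ) - N - 1) := by
        rw [Real.rpow_add hq0, Real.rpow_one]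
      rw [← h1]; congr 1; ring
    unfold qhahnG
    rw [hr]
    ring
  rw [← h0]
  exact (hcont.tendsto 0).mono_left nhdsWithin_le_nhds

theorem qracah_beta_to_qhahn_beta (q ta tb : ℝ) (hq0 : 0 < q) (hq1 : q < 1)
    (hta0 : 0 < ta * q) (hta1 : ta * q < 1) (htb0 : 0 < tb * q) (htb1 : tb * q < 1)
    (N n : ℕ) (hn : n ≤ N) :
    Tendsto (fun t : ℝ =>
        q ^ (Real.logb q t + 1) / c1 q *
          qRacahBetaR q (Real.logb q t) ((N : ℝ) + 1 + Real.logb q t)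
            (Real.logb q tb) (Real.logb q ta) n)
      (nhdsWithin 0 (Set.Ioi 0))
      (nhds (1 -
        (1 - ta * tb * q ^ (n + 1)) * (1 - ta * q ^ (n + 1)) * (1 - q ^ ((n : ℝ) - N)) /
          ((1 - ta * tb * q ^ (2 * n + 1)) * (1 - ta * tb * q ^ (2 * n + 2))) +
        ta * q ^ ((n : ℝ) - N) * (1 - q ^ n) * (1 - tb * q ^ n) *
          (1 - ta * tb * q ^ (n + N + 1)) /
          ((1 - ta * tb * q ^ (2 * n)) * (1 - ta * tb * q ^ (2 * n + 1))))) := by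
  have hta : 0 < ta := by
    rcases mul_pos_iff.mp hta0 with ⟨h, _⟩ | ⟨_, h⟩
    · exact h
    · linarith
  have htb : 0 < tb := by
    rcases mul_pos_iff.mp htb0 with ⟨h, _⟩ | ⟨_, h⟩
    · exact h
    · linarith
  have hev : qhahnG q ta tb N n =ᶠ[nhdsWithin 0 (Set.Ioi 0)] (fun t : ℝ =>
      q ^ (Real.logb q t + 1) / c1 q *
        qRacahBetaR q (Real.logb q t) ((N : ℝ) + 1 + Real.logb q t)
          (Real.logb q tb) (Real.logb q ta) n) := by
    filter_upwards [self_mem_nhdsWithin] with t ht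
    exact (qhahn_pointwise q ta tb hq0 hq1 hta htb N n t ht).symm
  exact Tendsto.congr' hev (qhahn_limit q ta tb hq0 N n)
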